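/- Let a₁, a₂, a₃, b₁, b₂, b₃ be real numbers with |a_j| ≤ 1/√2 and |b_j| ≤ 1/√2 for j = 1,2,3. Then the 4×4 matrix M = (1/2)Λ₀₀ + (1/3)(a₁b₁ Λ₁₁ + a₂b₂ Λ₂₂ + a₃b₃ Λ₃₃) is a density matrix (Hermitian, positive semidefinite, trace 1). Its eigenvalues are 1/4 + (1/6)(−a₁b₁ − a₂b₂ − a₃b₃), 1/4 + (1/6)(−a₁b₁ + a₂b₂ + a₃b₃), 1/4 + (1/6)(a₁b₁ − a₂b₂ + a₃b₃), and 1/4 + (1/6)(a₁b₁ + a₂b₂ − a₃b₃). -/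

import Mathlib

open Matrix Kronecker ComplexOrder Polynomial

noncomputable def lam : Fin 4 → Matrix (Fin 2) (Fin 2) ℂ
  | 0 => ((Real.sqrt 2 : ℂ))⁻¹ • !![1, 0; 0, 1]
  | 1 => ((Real.sqrt 2 : ℂ))⁻¹ • !![0, 1; 1, 0]
  | 2 => ((Real.sqrt 2 : ℂ))⁻¹ • !![0, -Complex.I; Complex.I, 0]
  | 3 => ((Real.sqrt 2 : ℂ))⁻¹ • !![1, 0; 0, -1]

noncomputable def Lam (j k : Fin 4) : Matrix (Fin 2 × Fin 2) (Fin 2 × Fin 2) ℂ :=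
  lam j ⊗ₖ lam k

/-- Auxiliary: the index equivalence `Fin 2 × Fin 2 ≃ Fin 4`. -/
def e4 : Fin 2 × Fin 2 ≃ Fin 4 where
  toFun p := ⟨2 * p.1.val + p.2.val, by have := p.1.isLt; have := p.2.isLt; omega⟩
  invFun i := (⟨i.val / 2, by omega⟩, ⟨i.val % 2, by omega⟩)
  left_inv := by decide
  right_inv := by decide

/-- Auxiliary: the matrix `M` written as an explicit `4 × 4` matrix. -/
noncomputable def Nmat (A B Cc : ℝ) : Matrix (Fin 4) (Fin 4) ℂ :=
  !![1/4 + (1/6)*Cc, 0, 0, (1/6)*(A - B);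
     0, 1/4 - (1/6)*Cc, (1/6)*(A + B), 0;
     0, (1/6)*(A + B), 1/4 - (1/6)*Cc, 0;
     (1/6)*(A - B), 0, 0, 1/4 + (1/6)*Cc]

/-- Auxiliary: diagonal matrix of half-eigenvalues. -/
noncomputable def Dmat (A B Cc : ℝ) : Matrix (Fin 4) (Fin 4) ℂ :=
  diagonal ![((1/8 + (1/12)*(A - B + Cc) : ℝ) : ℂ),
             ((1/8 + (1/12)*(-A + B + Cc) : ℝ) : ℂ),
             ((1/8 + (1/12)*(A + B - Cc) : ℝ) : ℂ),
             ((1/8 + (1/12)*(-A - B - Cc) : ℝ) : ℂ)]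

/-- Auxiliary: (unnormalized) eigenvector matrix. -/
def Wmat : Matrix (Fin 4) (Fin 4) ℂ :=
  !![1, 0, 0, 1; 1, 0, 0, -1; 0, 1, 1, 0; 0, 1, -1, 0]

lemma Nmat_decomp (A B Cc : ℝ) : Nmat A B Cc = Wmatᴴ * Dmat A B Cc * Wmat := by
  ext i j
  fin_cases i <;> fin_cases j <;>
    simp [Nmat, Dmat, Wmat, Matrix.mul_apply, Fin.sum_univ_four, Matrix.diagonal_apply,
      Matrix.conjTranspose_apply, Matrix.vecHead, Matrix.vecTail] <;>
    push_cast <;> ring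

lemma Nmat_psd (A B Cc : ℝ) (hA : |A| ≤ 1/2) (hB : |B| ≤ 1/2) (hC : |Cc| ≤ 1/2) :
    (Nmat A B Cc).PosSemidef := by
  rw [Nmat_decomp]
  refine Matrix.PosSemidef.conjTranspose_mul_mul_same ?_ Wmat
  refine Matrix.posSemidef_diagonal_iff.mpr fun i => ?_
  obtain ⟨hA1, hA2⟩ := abs_le.mp hA
  obtain ⟨hB1, hB2⟩ := abs_le.mp hB
  obtain ⟨hC1, hC2⟩ := abs_le.mp hC
  fin_cases i <;>
    · show (0 : ℂ) ≤ ((_ : ℝ) : ℂ)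
      rw [Complex.zero_le_real]
      linarith

set_option maxHeartbeats 1000000 in
theorem det_fin_four' {R : Type*} [CommRing R] (M : Matrix (Fin 4) (Fin 4) R) :
    M.det =
      M 0 0 * (M 1 1 * (M 2 2 * M 3 3 - M 2 3 * M 3 2) - M 1 2 * (M 2 1 * M 3 3 - M 2 3 * M 3 1)
        + M 1 3 * (M 2 1 * M 3 2 - M 2 2 * M 3 1))
      - M 0 1 * (M 1 0 * (M 2 2 * M 3 3 - M 2 3 * M 3 2) - M 1 2 * (M 2 0 * M 3 3 - M 2 3 * M 3 0)
        + M 1 3 * (M 2 0 * M 3 2 - M 2 2 * M 3 0))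
      + M 0 2 * (M 1 0 * (M 2 1 * M 3 3 - M 2 3 * M 3 1) - M 1 1 * (M 2 0 * M 3 3 - M 2 3 * M 3 0)
        + M 1 3 * (M 2 0 * M 3 1 - M 2 1 * M 3 0))
      - M 0 3 * (M 1 0 * (M 2 1 * M 3 2 - M 2 2 * M 3 1) - M 1 1 * (M 2 0 * M 3 2 - M 2 2 * M 3 0)
        + M 1 2 * (M 2 0 * M 3 1 - M 2 1 * M 3 0)) := by
  have e1 : (Fin.succ 2 : Fin 4) = 3 := rfl
  have e2 : ((2 : Fin 3).castSucc : Fin 4) = 2 := rfl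
  simp [Matrix.det_succ_row_zero, Fin.sum_univ_succ, Fin.succAbove]
  ring

set_option maxHeartbeats 2000000 in
lemma Nmat_charpoly (A B Cc : ℝ) :
    (Nmat A B Cc).charpoly =
      (X - C ((1 / 4 + (1 / 6) * (-A - B - Cc) : ℝ) : ℂ)) *
      (X - C ((1 / 4 + (1 / 6) * (-A + B + Cc) : ℝ) : ℂ)) *
      (X - C ((1 / 4 + (1 / 6) * (A - B + Cc) : ℝ) : ℂ)) *
      (X - C ((1 / 4 + (1 / 6) * (A + B - Cc) : ℝ) : ℂ)) := by
  have hc : charmatrix (Nmat A B Cc) =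
      !![X - C (1/4 + (1/6)*(Cc:ℂ)), 0, 0, -C ((1/6)*((A:ℂ) - B));
         0, X - C (1/4 - (1/6)*(Cc:ℂ)), -C ((1/6)*((A:ℂ) + B)), 0;
         0, -C ((1/6)*((A:ℂ) + B)), X - C (1/4 - (1/6)*(Cc:ℂ)), 0;
         -C ((1/6)*((A:ℂ) - B)), 0, 0, X - C (1/4 + (1/6)*(Cc:ℂ))] := by
    ext i j
    fin_cases i <;> fin_cases j <;>
      simp [charmatrix_apply, Nmat, Matrix.diagonal_apply]
  rw [Matrix.charpoly, hc, det_fin_four']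
  simp only [Matrix.cons_val', Matrix.cons_val_zero, Matrix.cons_val_one, Matrix.head_cons,
    Matrix.empty_val', Matrix.cons_val_fin_one, Matrix.head_fin_const, Matrix.cons_val_two,
    Matrix.cons_val_three, Matrix.tail_cons, Matrix.of_apply]
  simp only [Complex.ofReal_add, Complex.ofReal_mul, Complex.ofReal_neg, Complex.ofReal_sub,
    Complex.ofReal_div, Complex.ofReal_one, Complex.ofReal_ofNat]
  simp only [_root_.map_add, _root_.map_sub, _root_.map_mul, _root_.map_neg]
  ring

lemma Nmat_trace (A B Cc : ℝ) : (Nmat A B Cc).trace = 1 := by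
  simp [Nmat, Matrix.trace, Fin.sum_univ_four]
  ring

theorem stmt_14 (a1 a2 a3 b1 b2 b3 : ℝ)
    (ha1 : |a1| ≤ 1 / Real.sqrt 2) (ha2 : |a2| ≤ 1 / Real.sqrt 2)
    (ha3 : |a3| ≤ 1 / Real.sqrt 2) (hb1 : |b1| ≤ 1 / Real.sqrt 2)
    (hb2 : |b2| ≤ 1 / Real.sqrt 2) (hb3 : |b3| ≤ 1 / Real.sqrt 2)
    (M : Matrix (Fin 2 × Fin 2) (Fin 2 × Fin 2) ℂ)
    (hM : M = (1 / 2 : ℂ) • Lam 0 0 +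
        (1 / 3 : ℂ) • (((a1 * b1 : ℝ) : ℂ) • Lam 1 1 + ((a2 * b2 : ℝ) : ℂ) • Lam 2 2 +
          ((a3 * b3 : ℝ) : ℂ) • Lam 3 3)) :
    M.IsHermitian ∧ M.PosSemidef ∧ M.trace = 1 ∧
    M.charpoly =
      (X - C (((1 / 4 + (1 / 6) * (-(a1 * b1) - a2 * b2 - a3 * b3) : ℝ)) : ℂ)) *
      (X - C (((1 / 4 + (1 / 6) * (-(a1 * b1) + a2 * b2 + a3 * b3) : ℝ)) : ℂ)) *
      (X - C (((1 / 4 + (1 / 6) * (a1 * b1 - a2 * b2 + a3 * b3) : ℝ)) : ℂ)) *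
      (X - C (((1 / 4 + (1 / 6) * (a1 * b1 + a2 * b2 - a3 * b3) : ℝ)) : ℂ)) := by
  -- M is the reindexed explicit matrix
  have hM4 : M = (Nmat (a1*b1) (a2*b2) (a3*b3)).submatrix e4 e4 := by
    have h2 : ((Real.sqrt 2 : ℂ))⁻¹ * ((Real.sqrt 2 : ℂ))⁻¹ = 1/2 := by
      rw [← mul_inv]
      norm_cast
      rw [Real.mul_self_sqrt (by norm_num)]
      norm_num
    have h2' : (((Real.sqrt 2 : ℂ))⁻¹)^2 = 1/2 := by rw [sq]; exact h2
    subst hM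
    ext ⟨i, j⟩ ⟨k, l⟩
    fin_cases i <;> fin_cases j <;> fin_cases k <;> fin_cases l <;>
      simp [Lam, lam, Nmat, e4, Matrix.submatrix, kroneckerMap_apply] <;>
      push_cast <;> ring_nf <;> simp only [h2', Complex.I_sq] <;> ring
  -- bounds on products
  have hhalf : (1 / Real.sqrt 2) * (1 / Real.sqrt 2) = 1/2 := by
    rw [div_mul_div_comm, Real.mul_self_sqrt (by norm_num)]
    norm_num
  have hbd : ∀ a b : ℝ, |a| ≤ 1 / Real.sqrt 2 → |b| ≤ 1 / Real.sqrt 2 → |a * b| ≤ 1/2 := by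
    intro a b ha hb
    rw [abs_mul, ← hhalf]
    exact mul_le_mul ha hb (abs_nonneg b) (le_trans (abs_nonneg a) ha)
  have hpsd : M.PosSemidef := by
    rw [hM4]
    exact (Nmat_psd _ _ _ (hbd _ _ ha1 hb1) (hbd _ _ ha2 hb2) (hbd _ _ ha3 hb3)).submatrix _
  refine ⟨hpsd.isHermitian, hpsd, ?_, ?_⟩
  · rw [hM4]
    rw [show ((Nmat (a1*b1) (a2*b2) (a3*b3)).submatrix e4 e4).trace
        = (Nmat (a1*b1) (a2*b2) (a3*b3)).trace from
      Fintype.sum_equiv e4 _ _ fun p => rfl]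
    exact Nmat_trace _ _ _
  · rw [hM4]
    have hre : (Nmat (a1*b1) (a2*b2) (a3*b3)).submatrix e4 e4
        = reindex e4.symm e4.symm (Nmat (a1*b1) (a2*b2) (a3*b3)) := rfl
    rw [hre, Matrix.charpoly_reindex]
    rw [Nmat_charpoly]
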